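/- arXiv:1808.08068 — 2 statements merged into one kernel-verified Lean document; each statement's English description precedes it below -/
import Mathlib

section
/- Let L > 0, λ > 0, γ > 0. Consider g(v) = L·v − γ·ln(v + γ/λ) on [0,1]. If L ≤ γλ/(γ+λ) then g is minimized on [0,1] at v = 1; if L ≥ λ then g is minimized at v = 0; otherwise g is minimized at v = γ/L − γ/λ, which lies in the open interval (0,1). -/
lemma spl_aux (L gam c : ℝ) (hgam : 0 < gam) (v w : ℝ) (hv : 0 < v + c) (hw : 0 < w + c)
    (h : 0 ≤ (v - w) * (L - gam / (w + c))) :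
    L * w - gam * Real.log (w + c) ≤ L * v - gam * Real.log (v + c) := by
  have hlog : Real.log (v + c) - Real.log (w + c) ≤ (v - w) / (w + c) := by
    rw [← Real.log_div (ne_of_gt hv) (ne_of_gt hw)]
    have h1 := Real.log_le_sub_one_of_pos (div_pos hv hw)
    have h2 : (v + c) / (w + c) - 1 = (v - w) / (w + c) := by field_simp; ring
    linarith
  have heq : gam * ((v - w) / (w + c)) = (gam / (w + c)) * (v - w) := by
    field_simp
  have h3 : gam * (Real.log (v + c) - Real.log (w + c)) ≤ (gam / (w + c)) * (v - w) := by
    rw [← heq]; exact mul_le_mul_of_nonneg_left hlog hgam.le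
  nlinarith [h3, h]

theorem spl_soft_weight_subproblem (L lam gam : ℝ) (hL : 0 < L) (hlam : 0 < lam)
    (hgam : 0 < gam) :
    (L ≤ gam * lam / (gam + lam) →
      IsMinOn (fun v : ℝ => L * v - gam * Real.log (v + gam / lam)) (Set.Icc 0 1) 1) ∧
    (lam ≤ L →
      IsMinOn (fun v : ℝ => L * v - gam * Real.log (v + gam / lam)) (Set.Icc 0 1) 0) ∧
    (gam * lam / (gam + lam) < L → L < lam →
      IsMinOn (fun v : ℝ => L * v - gam * Real.log (v + gam / lam)) (Set.Icc 0 1)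
        (gam / L - gam / lam) ∧ (gam / L - gam / lam) ∈ Set.Ioo (0:ℝ) 1) := by
  set c := gam / lam with hc
  have hcpos : 0 < c := div_pos hgam hlam
  refine ⟨?_, ?_, ?_⟩
  · intro hle
    rw [isMinOn_iff]
    rintro v ⟨hv0, hv1⟩
    apply spl_aux L gam c hgam v 1 (by linarith) (by linarith)
    have h1 : gam / (1 + c) = gam * lam / (gam + lam) := by
      rw [hc]; field_simp; ring
    have : L - gam / (1 + c) ≤ 0 := by rw [h1]; linarith
    nlinarith
  · intro hle
    rw [isMinOn_iff]
    rintro v ⟨hv0, hv1⟩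
    apply spl_aux L gam c hgam v 0 (by linarith) (by linarith)
    have h1 : gam / (0 + c) = lam := by rw [hc]; field_simp; ring
    have : 0 ≤ L - gam / (0 + c) := by rw [h1]; linarith
    exact mul_nonneg (by linarith) this
  · intro hlt1 hlt2
    have hmem : gam / L - gam / lam ∈ Set.Ioo (0:ℝ) 1 := by
      constructor
      · rw [sub_pos]
        exact div_lt_div_of_pos_left hgam hL hlt2
      · rw [sub_lt_iff_lt_add]
        rw [div_lt_iff₀ hL]
        have : gam * lam / (gam + lam) * ((gam + lam) / lam) < L * ((gam + lam) / lam) := by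
          apply mul_lt_mul_of_pos_right hlt1
          positivity
        have he : gam * lam / (gam + lam) * ((gam + lam) / lam) = gam := by
          field_simp
        have he2 : L * ((gam + lam) / lam) = (1 + gam / lam) * L := by
          field_simp; ring
        rw [he, he2] at this
        exact this
    refine ⟨?_, hmem⟩
    rw [isMinOn_iff]
    rintro v ⟨hv0, hv1⟩
    have hw : gam / L - gam / lam + c = gam / L := by rw [hc]; ring
    apply spl_aux L gam c hgam v _ (by linarith) (by rw [hw]; positivity)
    rw [hw]
    have : gam / (gam / L) = L := by field_simp
    rw [this]
    simp
end

section
/- Let L > 0, λ > 0 and γ = λ/2. Then the soft-weight minimizer of v ↦ L·v − γ·ln(v + γ/λ) on [0,1] equals 1 if L ≤ λ/3, equals 0 if L ≥ λ, and equals λ/(2L) − 1/2 otherwise. -/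
lemma spl_aux_s2 (L lam v v₀ : ℝ) (hlam : 0 < lam) (hv : 0 ≤ v) (hv₀ : 0 ≤ v₀)
    (h : (lam / 2) * ((v - v₀) / (v₀ + 1/2)) ≤ L * (v - v₀)) :
    L * v₀ - (lam/2) * Real.log (v₀ + 1/2) ≤ L * v - (lam/2) * Real.log (v + 1/2) := by
  have hb : (0:ℝ) < v₀ + 1/2 := by linarith
  have ha : (0:ℝ) < v + 1/2 := by linarith
  have hlog : Real.log (v+1/2) - Real.log (v₀+1/2) ≤ (v - v₀)/(v₀+1/2) := by
    rw [← Real.log_div ha.ne' hb.ne']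
    calc Real.log ((v+1/2)/(v₀+1/2)) ≤ (v+1/2)/(v₀+1/2) - 1 :=
          Real.log_le_sub_one_of_pos (div_pos ha hb)
      _ = (v - v₀)/(v₀+1/2) := by field_simp; ring
  have := mul_le_mul_of_nonneg_left hlog (by linarith : (0:ℝ) ≤ lam/2)
  nlinarith

theorem spl_soft_weight_half (L lam : ℝ) (hL : 0 < L) (hlam : 0 < lam) :
    (L ≤ lam / 3 →
      IsMinOn (fun v : ℝ => L * v - (lam / 2) * Real.log (v + (lam / 2) / lam))
        (Set.Icc 0 1) 1) ∧
    (lam ≤ L →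
      IsMinOn (fun v : ℝ => L * v - (lam / 2) * Real.log (v + (lam / 2) / lam))
        (Set.Icc 0 1) 0) ∧
    (lam / 3 < L → L < lam →
      IsMinOn (fun v : ℝ => L * v - (lam / 2) * Real.log (v + (lam / 2) / lam))
        (Set.Icc 0 1) (lam / (2 * L) - 1 / 2)) := by
  have hhalf : (lam / 2) / lam = 1/2 := by field_simp
  refine ⟨?_, ?_, ?_⟩
  · intro hL3
    rw [isMinOn_iff]
    intro v hv
    simp only [hhalf]
    have h1 : v ≤ 1 := hv.2
    exact spl_aux_s2 L lam v 1 hlam hv.1 (by norm_num) (by rw [show lam / 2 * ((v - 1) / (1 + 1/2)) = lam/3 * (v-1) from by ring]; nlinarith [mul_nonneg (by linarith : (0:ℝ) ≤ lam/3 - L) (by linarith : (0:ℝ) ≤ 1 - v)])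
  · intro hlamL
    rw [isMinOn_iff]
    intro v hv
    simp only [hhalf]
    have := spl_aux_s2 L lam v 0 hlam hv.1 le_rfl (by rw [show lam / 2 * ((v - 0) / (0 + 1/2)) = lam * v from by ring]; nlinarith [mul_nonneg (by linarith : (0:ℝ) ≤ L - lam) hv.1])
    simpa using this
  · intro h1 h2
    rw [isMinOn_iff]
    intro v hv
    simp only [hhalf]
    have hv0 : (0:ℝ) ≤ lam / (2*L) - 1/2 := by
      rw [sub_nonneg, le_div_iff₀ (by linarith)]
      linarith
    refine spl_aux_s2 L lam v _ hlam hv.1 hv0 (le_of_eq ?_)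
    have : lam / (2*L) - 1/2 + 1/2 = lam / (2*L) := by ring
    rw [this]
    field_simp
end
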